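/- Let X be a topological space and suppose given, for each open U ⊆ X, a set D(U) of continuous maps U → I, such that the restriction of any member of D(U) to any open U' ⊆ U belongs to D(U'). Let d_D X be the set of continuous paths p : I → X such that for every open U ⊆ X and every c ∈ D(U), the map c ∘ p is locally non-decreasing on p⁻¹(U). Then (X, d_D X) is a saturated d-space. -/

import Mathlib

open unitInterval Topology Set

/-- Concatenation of two continuous paths `p q : C(I, X)` with `p 1 = q 0`,
traversing `p` on `[0, 1/2]` and `q` on `[1/2, 1]` (both at double speed). -/
noncomputable def concatPath {X : Type*} [TopologicalSpace X]
    (p q : C(unitInterval, X)) (h : p 1 = q 0) : C(unitInterval, X) :=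
  ((⟨p, rfl, rfl⟩ : Path (p 0) (p 1)).trans
    ((⟨q, rfl, rfl⟩ : Path (q 0) (q 1)).cast h rfl)).toContinuousMap

/-- A d-space structure on a topological space `X`: a set of continuous paths
`I → X` containing the constant paths, closed under concatenation and under
precomposition with continuous non-decreasing maps `I → I`. -/
structure DSpace (X : Type*) [TopologicalSpace X] where
  d : Set C(unitInterval, X)
  const_mem : ∀ x : X, ContinuousMap.const unitInterval x ∈ d
  concat_mem : ∀ p ∈ d, ∀ q ∈ d, ∀ h : p 1 = q 0, concatPath p q h ∈ d
  reparam_mem : ∀ p ∈ d, ∀ φ : C(unitInterval, unitInterval), Monotone ⇑φ → p.comp φ ∈ d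

/-- `c` is a directed function on the (open) set `U` for the set of directed
paths `d`: it is continuous on `U` and non-decreasing along every directed path
with image contained in `U`. -/
def IsDirectedFn {X : Type*} [TopologicalSpace X] (d : Set C(unitInterval, X))
    (U : Set X) (c : X → unitInterval) : Prop :=
  ContinuousOn c U ∧ ∀ p ∈ d, Set.range ⇑p ⊆ U → Monotone (c ∘ ⇑p)

/-- A path `p` is weakly directed when, for every directed function `c` on an
open `U`, the map `c ∘ p` is locally non-decreasing on `p ⁻¹' U`. -/
def IsWeaklyDirected {X : Type*} [TopologicalSpace X] (d : Set C(unitInterval, X))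
    (p : C(unitInterval, X)) : Prop :=
  ∀ U : Set X, IsOpen U → ∀ c : X → unitInterval, IsDirectedFn d U c →
    ∀ t : unitInterval, p t ∈ U →
      ∃ V ∈ 𝓝 t, V ⊆ ⇑p ⁻¹' U ∧ MonotoneOn (c ∘ ⇑p) V

/-- The set `d̂X` of weakly directed paths. -/
def satPaths {X : Type*} [TopologicalSpace X] (d : Set C(unitInterval, X)) :
    Set C(unitInterval, X) :=
  {p | IsWeaklyDirected d p}

/-- A set of directed paths is saturated when every weakly directed path is directed. -/
def IsSaturated {X : Type*} [TopologicalSpace X] (d : Set C(unitInterval, X)) : Prop :=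
  satPaths d = d

/-- The paths along which all local sections of a presheaf `Dd` of `I`-valued
functions are locally non-decreasing. -/
def dDPaths {X : Type*} [TopologicalSpace X] (Dd : Set X → Set (X → unitInterval)) :
    Set C(unitInterval, X) :=
  {p | ∀ U : Set X, IsOpen U → ∀ c ∈ Dd U, ∀ t : unitInterval, p t ∈ U →
      ∃ V ∈ 𝓝 t, V ⊆ ⇑p ⁻¹' U ∧ MonotoneOn (c ∘ ⇑p) V}

/-- Given, for each open `U ⊆ X`, a set `Dd U` of continuous `I`-valued functions on
`U`, stable under restriction to smaller opens, the set `dDPaths Dd` of paths along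
which all these functions are locally non-decreasing is a saturated d-space structure
on `X`. -/
noncomputable def half : unitInterval := ⟨1/2, by norm_num⟩

noncomputable def phi1 : C(unitInterval, unitInterval) :=
  ⟨fun u => ⟨min (2 * (u:ℝ)) 1, le_min (by have := u.2.1; linarith) zero_le_one, min_le_right _ _⟩,
   Continuous.subtype_mk (Continuous.min (by fun_prop) continuous_const) _⟩

noncomputable def phi2 : C(unitInterval, unitInterval) :=
  ⟨fun u => ⟨max (2 * (u:ℝ) - 1) 0, le_max_right _ _,
      max_le (by have := u.2.2; linarith) zero_le_one⟩,
   Continuous.subtype_mk (Continuous.max (by fun_prop) continuous_const) _⟩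

lemma phi1_mono : Monotone ⇑phi1 := fun a b hab => by
  simp only [phi1, ContinuousMap.coe_mk, Subtype.mk_le_mk]
  exact min_le_min (mul_le_mul_of_nonneg_left (show (a:ℝ) ≤ b from hab) (by norm_num)) le_rfl

lemma phi2_mono : Monotone ⇑phi2 := fun a b hab => by
  simp only [phi2, ContinuousMap.coe_mk, Subtype.mk_le_mk]
  exact max_le_max (sub_le_sub_right (mul_le_mul_of_nonneg_left (show (a:ℝ) ≤ b from hab) (by norm_num)) 1) le_rfl

lemma phi1_half : phi1 half = 1 := by
  simp only [phi1, half, ContinuousMap.coe_mk]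
  ext; norm_num

lemma phi2_half : phi2 half = 0 := by
  simp only [phi2, half, ContinuousMap.coe_mk]
  ext; norm_num

lemma concat_left {X : Type*} [TopologicalSpace X] (p q : C(unitInterval, X))
    (h : p 1 = q 0) (u : unitInterval) (hu : (u:ℝ) ≤ 1/2) :
    concatPath p q h u = p (phi1 u) := by
  simp only [concatPath, Path.coe_toContinuousMap]
  rw [Path.trans_apply, dif_pos hu]
  show p _ = p _
  congr 1
  ext
  simp only [phi1, ContinuousMap.coe_mk]
  rw [min_eq_left (by linarith)]

lemma concat_right {X : Type*} [TopologicalSpace X] (p q : C(unitInterval, X))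
    (h : p 1 = q 0) (u : unitInterval) (hu : 1/2 ≤ (u:ℝ)) :
    concatPath p q h u = q (phi2 u) := by
  rcases eq_or_lt_of_le hu with heq | hlt
  · have hu' : (u:ℝ) ≤ 1/2 := heq.ge
    rw [concat_left p q h u hu']
    have h1 : phi1 u = 1 := by ext; simp [phi1, ← heq]
    have h2 : phi2 u = 0 := by ext; simp [phi2, ← heq]
    rw [h1, h2, h]
  · have hu' : ¬ ((u:ℝ) ≤ 1/2) := not_le.mpr hlt
    simp only [concatPath, Path.coe_toContinuousMap]
    rw [Path.trans_apply, dif_neg hu']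
    show q _ = q _
    congr 1
    ext
    simp only [phi2, ContinuousMap.coe_mk]
    rw [max_eq_left (by linarith)]

lemma aux_le (f : unitInterval → unitInterval) (x y : unitInterval) (hxy : x ≤ y)
    (h : ∀ t : unitInterval, x ≤ t → t ≤ y → ∃ V ∈ 𝓝 t, MonotoneOn f V) :
    f x ≤ f y := by
  set A : Set ℝ := {u : ℝ | (x : ℝ) ≤ u ∧ u ≤ (y : ℝ) ∧
      ∀ v : unitInterval, x ≤ v → (v : ℝ) ≤ u → f x ≤ f v} with hA
  have hxA : (x : ℝ) ∈ A := by
    refine ⟨le_refl _, hxy, fun v hv1 hv2 => ?_⟩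
    have : v = x := le_antisymm hv2 hv1
    rw [this]
  have hne : A.Nonempty := ⟨x, hxA⟩
  have hbdd : BddAbove A := ⟨(y : ℝ), fun u hu => hu.2.1⟩
  set m : ℝ := sSup A with hm
  have hxm : (x : ℝ) ≤ m := le_csSup hbdd hxA
  have hmy : m ≤ (y : ℝ) := csSup_le hne (fun u hu => hu.2.1)
  have hmI : m ∈ Icc (0:ℝ) 1 := ⟨le_trans x.2.1 hxm, le_trans hmy y.2.2⟩
  set mI : unitInterval := ⟨m, hmI⟩ with hmIdef
  have hxmI : x ≤ mI := hxm
  have hmIy : mI ≤ y := hmy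
  -- step 1 : everything up to m is above f x
  have step1 : ∀ v : unitInterval, x ≤ v → (v : ℝ) ≤ m → f x ≤ f v := by
    intro v hv1 hv2
    rcases lt_or_eq_of_le hv2 with hlt | heq
    · obtain ⟨u, huA, hvu⟩ := exists_lt_of_lt_csSup hne hlt
      exact huA.2.2 v hv1 hvu.le
    · -- v = m
      have hveq : v = mI := Subtype.ext heq
      rcases lt_or_eq_of_le hxm with hxlt | hxeq
      · obtain ⟨V, hV, hmono⟩ := h mI hxmI hmIy
        obtain ⟨ε, hε, hball⟩ := Metric.mem_nhds_iff.mp hV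
        have hl : max (x : ℝ) (m - ε/2) < m := max_lt hxlt (by linarith)
        obtain ⟨u, huA, hu⟩ := exists_lt_of_lt_csSup hne hl
        have hum : u ≤ m := le_csSup hbdd huA
        have huI : u ∈ Icc (0:ℝ) 1 := ⟨le_trans x.2.1 huA.1, le_trans huA.2.1 y.2.2⟩
        set uI : unitInterval := ⟨u, huI⟩ with huIdef
        have huball : uI ∈ Metric.ball mI ε := by
          simp only [Metric.mem_ball, Subtype.dist_eq, Real.dist_eq, huIdef]
          rw [abs_lt]
          have := lt_of_le_of_lt (le_max_right (x:ℝ) (m - ε/2)) hu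
          constructor <;> linarith
        have hmball : mI ∈ Metric.ball mI ε := Metric.mem_ball_self hε
        have hfu : f x ≤ f uI := huA.2.2 uI huA.1 le_rfl
        have : f uI ≤ f mI := hmono (hball huball) (hball hmball) hum
        rw [hveq]; exact le_trans hfu this
      · have : v = x := Subtype.ext (heq ▸ hxeq.symm)
        rw [this]
  -- step 2 : m = y
  have hmy' : m = (y : ℝ) := by
    by_contra hne'
    have hlt : m < (y : ℝ) := lt_of_le_of_ne hmy hne'
    obtain ⟨V, hV, hmono⟩ := h mI hxmI hmIy
    obtain ⟨ε, hε, hball⟩ := Metric.mem_nhds_iff.mp hV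
    set w : ℝ := min (m + ε/2) (y : ℝ) with hw
    have hmw : m < w := lt_min (by linarith) hlt
    have hwA : w ∈ A := by
      refine ⟨le_trans hxm hmw.le, min_le_right _ _, fun v hv1 hv2 => ?_⟩
      rcases le_or_gt (v : ℝ) m with hvm | hvm
      · exact step1 v hv1 hvm
      · have hvball : v ∈ Metric.ball mI ε := by
          simp only [Metric.mem_ball, Subtype.dist_eq, Real.dist_eq]
          rw [abs_lt]
          have : (v:ℝ) ≤ m + ε/2 := le_trans hv2 (min_le_left _ _)
          constructor <;> [linarith; linarith]
        have hmball : mI ∈ Metric.ball mI ε := Metric.mem_ball_self hε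
        have h1 : f x ≤ f mI := step1 mI hxmI le_rfl
        have h2 : f mI ≤ f v := hmono (hball hmball) (hball hvball) hvm.le
        exact le_trans h1 h2
    have : w ≤ m := le_csSup hbdd hwA
    linarith
  exact step1 y hxy (le_of_eq hmy'.symm)


lemma dD_reparam {X : Type*} [TopologicalSpace X] (Dd : Set X → Set (X → unitInterval))
    (p : C(unitInterval, X)) (hp : p ∈ dDPaths Dd) (φ : C(unitInterval, unitInterval))
    (hφ : Monotone ⇑φ) : p.comp φ ∈ dDPaths Dd := by
  intro U hU c hc t ht
  obtain ⟨V, hV, hVU, hmono⟩ := hp U hU c hc (φ t) ht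
  refine ⟨⇑φ ⁻¹' V, φ.continuous.continuousAt.preimage_mem_nhds hV, ?_, ?_⟩
  · intro u hu
    exact hVU hu
  · intro a ha b hb hab
    exact hmono ha hb (hφ hab)

lemma dD_concat {X : Type*} [TopologicalSpace X] (Dd : Set X → Set (X → unitInterval))
    (p : C(unitInterval, X)) (hp : p ∈ dDPaths Dd)
    (q : C(unitInterval, X)) (hq : q ∈ dDPaths Dd) (h : p 1 = q 0) :
    concatPath p q h ∈ dDPaths Dd := by
  intro U hU c hc t ht
  set r := concatPath p q h with hr
  rcases lt_trichotomy ((t:ℝ)) (1/2) with hlt | heq | hgt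
  · -- left part
    have hrt : r t = p (phi1 t) := concat_left p q h t hlt.le
    obtain ⟨V, hV, hVU, hmono⟩ := hp U hU c hc (phi1 t) (by rwa [hrt] at ht)
    refine ⟨⇑phi1 ⁻¹' V ∩ {u : unitInterval | (u:ℝ) < 1/2}, ?_, ?_, ?_⟩
    · refine Filter.inter_mem (phi1.continuous.continuousAt.preimage_mem_nhds hV) ?_
      have hopen : IsOpen {u : unitInterval | (u:ℝ) < 1/2} :=
        isOpen_Iio.preimage continuous_subtype_val
      exact hopen.mem_nhds hlt
    · intro u hu
      have : r u = p (phi1 u) := concat_left p q h u hu.2.le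
      simp only [mem_preimage, this]
      exact hVU hu.1
    · intro a ha b hb hab
      have ha' : r a = p (phi1 a) := concat_left p q h a ha.2.le
      have hb' : r b = p (phi1 b) := concat_left p q h b hb.2.le
      simp only [Function.comp_apply, ha', hb']
      exact hmono ha.1 hb.1 (phi1_mono hab)
  · -- t = half
    have hth : t = half := Subtype.ext heq
    have hrt : r t = p 1 := by
      rw [concat_left p q h t heq.le, hth, phi1_half]
    have hp1 : p 1 ∈ U := by rwa [hrt] at ht
    have hq0 : q 0 ∈ U := by rwa [h] at hp1
    obtain ⟨V₁, hV₁, hV₁U, hm₁⟩ := hp U hU c hc 1 hp1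
    obtain ⟨V₂, hV₂, hV₂U, hm₂⟩ := hq U hU c hc 0 hq0
    set W₁ : Set unitInterval := ⇑phi1 ⁻¹' V₁ ∩ Iic half with hW₁
    set W₂ : Set unitInterval := ⇑phi2 ⁻¹' V₂ ∩ Ici half with hW₂
    have hpre1 : ⇑phi1 ⁻¹' V₁ ∈ 𝓝 t := by
      refine phi1.continuous.continuousAt.preimage_mem_nhds ?_
      rw [hth, phi1_half]; exact hV₁
    have hpre2 : ⇑phi2 ⁻¹' V₂ ∈ 𝓝 t := by
      refine phi2.continuous.continuousAt.preimage_mem_nhds ?_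
      rw [hth, phi2_half]; exact hV₂
    have hhalfW₁ : half ∈ W₁ := by
      refine ⟨?_, mem_Iic.mpr le_rfl⟩
      simp only [mem_preimage, phi1_half]
      exact mem_of_mem_nhds hV₁
    have hhalfW₂ : half ∈ W₂ := by
      refine ⟨?_, mem_Ici.mpr le_rfl⟩
      simp only [mem_preimage, phi2_half]
      exact mem_of_mem_nhds hV₂
    have hleft : ∀ u ∈ W₁, r u = p (phi1 u) := fun u hu => concat_left p q h u hu.2
    have hright : ∀ u ∈ W₂, r u = q (phi2 u) := fun u hu => concat_right p q h u hu.2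
    refine ⟨W₁ ∪ W₂, ?_, ?_, ?_⟩
    · refine Filter.mem_of_superset (Filter.inter_mem hpre1 hpre2) ?_
      intro u hu
      rcases le_total u half with h' | h'
      · exact Or.inl ⟨hu.1, h'⟩
      · exact Or.inr ⟨hu.2, h'⟩
    · rintro u (hu | hu)
      · simp only [mem_preimage, hleft u hu]; exact hV₁U hu.1
      · simp only [mem_preimage, hright u hu]; exact hV₂U hu.1
    · rintro a (ha | ha) b (hb | hb) hab
      · simp only [Function.comp_apply, hleft a ha, hleft b hb]
        exact hm₁ ha.1 hb.1 (phi1_mono hab)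
      · -- a ∈ W₁, b ∈ W₂
        have step1 : (c ∘ ⇑r) a ≤ (c ∘ ⇑r) half := by
          simp only [Function.comp_apply, hleft a ha, hleft half hhalfW₁]
          exact hm₁ ha.1 hhalfW₁.1 (phi1_mono ha.2)
        have step2 : (c ∘ ⇑r) half ≤ (c ∘ ⇑r) b := by
          simp only [Function.comp_apply, hright half hhalfW₂, hright b hb]
          exact hm₂ hhalfW₂.1 hb.1 (phi2_mono hb.2)
        exact le_trans step1 step2
      · -- a ∈ W₂, b ∈ W₁ : a = b
        have : a = b := le_antisymm hab (le_trans hb.2 ha.2)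
        rw [this]
      · simp only [Function.comp_apply, hright a ha, hright b hb]
        exact hm₂ ha.1 hb.1 (phi2_mono hab)
  · -- right part
    have hrt : r t = q (phi2 t) := concat_right p q h t hgt.le
    obtain ⟨V, hV, hVU, hmono⟩ := hq U hU c hc (phi2 t) (by rwa [hrt] at ht)
    refine ⟨⇑phi2 ⁻¹' V ∩ {u : unitInterval | 1/2 < (u:ℝ)}, ?_, ?_, ?_⟩
    · refine Filter.inter_mem (phi2.continuous.continuousAt.preimage_mem_nhds hV) ?_
      have hopen : IsOpen {u : unitInterval | 1/2 < (u:ℝ)} :=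
        isOpen_Ioi.preimage continuous_subtype_val
      exact hopen.mem_nhds hgt
    · intro u hu
      have : r u = q (phi2 u) := concat_right p q h u hu.2.le
      simp only [mem_preimage, this]
      exact hVU hu.1
    · intro a ha b hb hab
      have ha' : r a = q (phi2 a) := concat_right p q h a ha.2.le
      have hb' : r b = q (phi2 b) := concat_right p q h b hb.2.le
      simp only [Function.comp_apply, ha', hb']
      exact hmono ha.1 hb.1 (phi2_mono hab)

lemma dD_const {X : Type*} [TopologicalSpace X] (Dd : Set X → Set (X → unitInterval))
    (x : X) : ContinuousMap.const unitInterval x ∈ dDPaths Dd := by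
  intro U hU c hc t ht
  exact ⟨univ, Filter.univ_mem, fun u _ => ht, fun a _ b _ _ => le_rfl⟩

lemma dD_sub_sat {X : Type*} [TopologicalSpace X] (Dd : Set X → Set (X → unitInterval))
    (p : C(unitInterval, X)) (hp : p ∈ dDPaths Dd) : IsWeaklyDirected (dDPaths Dd) p := by
  intro U hU c hdf t ht
  have hUp : ⇑p ⁻¹' U ∈ 𝓝 t := (hU.preimage p.continuous).mem_nhds ht
  obtain ⟨ε, hε, hball⟩ := Metric.mem_nhds_iff.mp hUp
  set α : ℝ := max 0 ((t:ℝ) - ε/2) with hα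
  set β : ℝ := min 1 ((t:ℝ) + ε/2) with hβ
  have hα0 : 0 ≤ α := le_max_left _ _
  have hα1 : α ≤ 1 := max_le zero_le_one (by have := t.2.2; linarith)
  have hβ0 : 0 ≤ β := le_min zero_le_one (by have := t.2.1; linarith)
  have hβ1 : β ≤ 1 := min_le_left _ _
  set aI : unitInterval := ⟨α, hα0, hα1⟩ with haI
  set bI : unitInterval := ⟨β, hβ0, hβ1⟩ with hbI
  have haIt : aI ≤ bI := by
    show α ≤ β
    refine max_le (le_min (by linarith [t.2.1, t.2.2]) (by have := t.2.1; linarith)) ?_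
    exact le_min (by have := t.2.2; linarith) (by linarith)
  have hIccball : Icc aI bI ⊆ Metric.ball t ε := by
    intro u hu
    have h1 : α ≤ (u:ℝ) := hu.1
    have h2 : (u:ℝ) ≤ β := hu.2
    have h3 : (t:ℝ) - ε/2 ≤ α := le_max_right _ _
    have h4 : β ≤ (t:ℝ) + ε/2 := min_le_right _ _
    simp only [Metric.mem_ball, Subtype.dist_eq, Real.dist_eq]
    rw [abs_lt]; constructor <;> linarith
  have hIccnhds : Icc aI bI ∈ 𝓝 t := by
    refine Filter.mem_of_superset (Metric.ball_mem_nhds t (half_pos hε)) ?_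
    intro u hu
    simp only [Metric.mem_ball, Subtype.dist_eq, Real.dist_eq] at hu
    rw [abs_lt] at hu
    constructor
    · show α ≤ (u:ℝ); exact max_le u.2.1 (by linarith [hu.1])
    · show (u:ℝ) ≤ β; exact le_min u.2.2 (by linarith [hu.2])
  have hIccU : Icc aI bI ⊆ ⇑p ⁻¹' U := fun u hu => hball (hIccball hu)
  refine ⟨Icc aI bI, hIccnhds, hIccU, ?_⟩
  rcases eq_or_lt_of_le haIt with heq | hlt
  · intro u hu v hv huv
    have hu' : u = aI := le_antisymm (heq ▸ hu.2) hu.1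
    have hv' : v = aI := le_antisymm (heq ▸ hv.2) hv.1
    rw [hu', hv']
  · have hαβ : α < β := hlt
    have hβα : (0:ℝ) < β - α := by linarith
    set φab : C(unitInterval, unitInterval) :=
      ⟨fun s => ⟨α + (s:ℝ) * (β - α), by nlinarith [s.2.1, s.2.2],
        by nlinarith [s.2.1, s.2.2]⟩,
       Continuous.subtype_mk (by fun_prop) _⟩ with hφab
    have hφmono : Monotone ⇑φab := by
      intro s s' hss'
      show α + (s:ℝ) * (β - α) ≤ α + (s':ℝ) * (β - α)
      have : (s:ℝ) ≤ (s':ℝ) := hss'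
      nlinarith
    have hφmem : ∀ s : unitInterval, φab s ∈ Icc aI bI := by
      intro s
      constructor
      · show α ≤ α + (s:ℝ) * (β - α); nlinarith [s.2.1]
      · show α + (s:ℝ) * (β - α) ≤ β; nlinarith [s.2.2]
    have hcomp : p.comp φab ∈ dDPaths Dd := dD_reparam Dd p hp φab hφmono
    have hrange : Set.range ⇑(p.comp φab) ⊆ U := by
      rintro _ ⟨s, rfl⟩
      exact hIccU (hφmem s)
    have hmono : Monotone (c ∘ ⇑(p.comp φab)) := hdf.2 _ hcomp hrange
    intro u hu v hv huv
    set su : unitInterval := ⟨((u:ℝ) - α) / (β - α),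
      div_nonneg (by linarith [show α ≤ (u:ℝ) from hu.1]) hβα.le,
      (div_le_one hβα).mpr (by linarith [show (u:ℝ) ≤ β from hu.2])⟩ with hsu
    set sv : unitInterval := ⟨((v:ℝ) - α) / (β - α),
      div_nonneg (by linarith [show α ≤ (v:ℝ) from hv.1]) hβα.le,
      (div_le_one hβα).mpr (by linarith [show (v:ℝ) ≤ β from hv.2])⟩ with hsv
    have h1 : φab su = u := by
      ext
      show α + ((u:ℝ) - α) / (β - α) * (β - α) = u
      field_simp
      ring
    have h2 : φab sv = v := by
      ext
      show α + ((v:ℝ) - α) / (β - α) * (β - α) = v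
      field_simp
      ring
    have hsusv : su ≤ sv := by
      show ((u:ℝ) - α) / (β - α) ≤ ((v:ℝ) - α) / (β - α)
      have : (u:ℝ) ≤ (v:ℝ) := huv
      gcongr
    have := hmono hsusv
    simpa only [Function.comp_apply, ContinuousMap.comp_apply, h1, h2] using this

lemma dD_sat_sub {X : Type*} [TopologicalSpace X] (Dd : Set X → Set (X → unitInterval))
    (hcont : ∀ U : Set X, IsOpen U → ∀ c ∈ Dd U, ContinuousOn c U)
    (p : C(unitInterval, X)) (hp : IsWeaklyDirected (dDPaths Dd) p) : p ∈ dDPaths Dd := by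
  intro U hU c hc t ht
  have hdf : IsDirectedFn (dDPaths Dd) U c := by
    refine ⟨hcont U hU c hc, fun q hq hrange => ?_⟩
    intro a b hab
    refine aux_le (c ∘ ⇑q) a b hab (fun s _ _ => ?_)
    obtain ⟨V, hV, _, hm⟩ := hq U hU c hc s (hrange (mem_range_self s))
    exact ⟨V, hV, hm⟩
  exact hp U hU c hdf t ht

theorem stmt_6 {X : Type*} [TopologicalSpace X] (Dd : Set X → Set (X → unitInterval))
    (hcont : ∀ U : Set X, IsOpen U → ∀ c ∈ Dd U, ContinuousOn c U)
    (hres : ∀ U U' : Set X, IsOpen U → IsOpen U' → U' ⊆ U → ∀ c ∈ Dd U, c ∈ Dd U') :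
    (∀ x : X, ContinuousMap.const unitInterval x ∈ dDPaths Dd) ∧
    (∀ p ∈ dDPaths Dd, ∀ q ∈ dDPaths Dd, ∀ h : p 1 = q 0,
      concatPath p q h ∈ dDPaths Dd) ∧
    (∀ p ∈ dDPaths Dd, ∀ φ : C(unitInterval, unitInterval), Monotone ⇑φ →
      p.comp φ ∈ dDPaths Dd) ∧
    IsSaturated (dDPaths Dd) := by
  refine ⟨fun x => dD_const Dd x, fun p hp q hq h => dD_concat Dd p hp q hq h,
    fun p hp φ hφ => dD_reparam Dd p hp φ hφ, ?_⟩
  apply Set.Subset.antisymm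
  · exact fun p hp => dD_sat_sub Dd hcont p hp
  · exact fun p hp => dD_sub_sat Dd p hp
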